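/- arXiv:2501.05347 — 2 statements merged into one kernel-verified Lean document; each statement's English description precedes it below -/
import Mathlib

section
/- The family of sequences {sinc(· - τ) : restricted to ℤ} satisfies ∑_{n∈ℤ} sinc(n - τ) sinc(n - τ') = sinc(τ - τ') for all real τ, τ'; in particular ∑_{n∈ℤ} sinc²(n - τ) = 1 for every real τ. -/
open scoped Real

/-- The normalized sinc function: `sinc x = sin (π x) / (π x)` with `sinc 0 = 1`. -/
noncomputable def sinc (x : ℝ) : ℝ := if x = 0 then 1 else Real.sin (π * x) / (π * x)

open MeasureTheory AddCircle Complex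

lemma sinc_neg (x : ℝ) : sinc (-x) = sinc x := by
  rcases eq_or_ne x 0 with rfl | hx
  · simp
  · simp [sinc, hx, neg_eq_zero, mul_neg, Real.sin_neg, neg_div_neg_eq]

lemma key_integral (c : ℝ) :
    (∫ x in (-(1/2) : ℝ)..(-(1/2) + 1), Complex.exp (2 * π * Complex.I * c * x))
      = (sinc c : ℂ) := by
  rcases eq_or_ne c 0 with rfl | hc
  · simp [sinc]
  · have hC : (2 * (π:ℂ) * Complex.I * c) ≠ 0 := by
      simp [Real.pi_ne_zero, Complex.I_ne_zero, hc, Complex.ofReal_eq_zero]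
    rw [show (fun x : ℝ => Complex.exp (2 * π * Complex.I * c * x)) =
        fun x : ℝ => Complex.exp ((2 * (π:ℂ) * Complex.I * c) * x) from rfl,
      integral_exp_mul_complex hC]
    have h1 : ((2:ℂ) * π * Complex.I * c) * ((-(1/2) : ℝ) + 1 : ℝ) = (π * c : ℂ) * Complex.I := by
      push_cast; ring
    have h2 : ((2:ℂ) * π * Complex.I * c) * ((-(1/2) : ℝ) : ℝ) = -((π * c : ℂ) * Complex.I) := by
      push_cast; ring
    rw [h1, h2, ← neg_mul, Complex.exp_mul_I, Complex.exp_mul_I, Complex.cos_neg,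
      Complex.sin_neg]
    have hπc : (π : ℂ) * c ≠ 0 := by
      simp [Real.pi_ne_zero, hc, Complex.ofReal_eq_zero]
    rw [sinc, if_neg hc]
    push_cast
    rw [div_eq_div_iff hC (by simpa using hπc)]
    ring

instance : Fact ((0:ℝ) < 1) := ⟨one_pos⟩

/-- The periodized exponential `exp (2πiτx)` on the circle of period 1. -/
noncomputable def G (τ : ℝ) : AddCircle (1:ℝ) → ℂ :=
  liftIoc 1 (-(1/2)) fun x => Complex.exp (2 * π * Complex.I * τ * x)

lemma G_measurable (τ : ℝ) : Measurable (G τ) := by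
  have hf : Measurable fun x : ℝ => Complex.exp (2 * π * Complex.I * τ * x) := by
    fun_prop
  exact (hf.comp measurable_subtype_coe).comp (AddCircle.measurableEquivIoc 1 (-(1/2))).measurable

lemma norm_G (τ : ℝ) (x : AddCircle 1) : ‖G τ x‖ = 1 := by
  rw [G, liftIoc]
  simp only [Function.comp_apply, Set.restrict_apply]
  rw [Complex.norm_exp]
  norm_num [Complex.mul_re, Complex.mul_im]

lemma G_memℒp (τ : ℝ) : MemLp (G τ) 2 haarAddCircle :=
  MemLp.of_bound (G_measurable τ).aestronglyMeasurable 1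
    (Filter.Eventually.of_forall fun x => (norm_G τ x).le)

lemma G_coeff (τ : ℝ) (n : ℤ) : fourierCoeff (G τ) n = (sinc ((n:ℝ) - τ) : ℂ) := by
  rw [fourierCoeff_eq_intervalIntegral _ _ (-(1/2))]
  have h1 : (∫ x in (-(1/2):ℝ)..(-(1/2)+1), fourier (-n) (↑x : AddCircle (1:ℝ)) • G τ ↑x)
      = ∫ x in (-(1/2):ℝ)..(-(1/2)+1), Complex.exp (2 * π * Complex.I * ((τ - (n:ℝ) : ℝ) : ℂ) * x) := by
    refine intervalIntegral.integral_congr_ae (MeasureTheory.ae_of_all _ fun x hx => ?_)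
    rw [Set.uIoc_of_le (by norm_num : (-(1/2):ℝ) ≤ -(1/2)+1)] at hx
    rw [G, liftIoc_coe_apply hx, fourier_coe_apply, smul_eq_mul, ← Complex.exp_add]
    congr 1
    push_cast
    field_simp
    ring
  rw [h1, key_integral (τ - (n:ℝ))]
  have : τ - (n:ℝ) = -((n:ℝ) - τ) := by ring
  rw [this, sinc_neg]
  norm_num

lemma G_mul (τ τ' : ℝ) (x : AddCircle 1) :
    (starRingEnd ℂ) (G τ x) * G τ' x = G (τ' - τ) x := by
  simp only [G, liftIoc, Function.comp_apply, Set.restrict_apply]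
  rw [← Complex.exp_conj, ← Complex.exp_add]
  congr 1
  simp only [map_mul, Complex.conj_I, Complex.conj_ofReal, map_ofNat, Complex.ofReal_sub]
  ring

theorem stmt6' (τ τ' : ℝ) :
    (∑' n : ℤ, sinc ((n : ℝ) - τ) * sinc ((n : ℝ) - τ')) = sinc (τ - τ') := by
  set F : ℝ → Lp ℂ 2 (@haarAddCircle 1 _) := fun t => (G_memℒp t).toLp (G t) with hF
  have hcoe : ∀ t n, fourierCoeff (⇑(F t)) n = fourierCoeff (G t) n := by
    intro t n
    exact integral_congr_ae ((MemLp.coeFn_toLp (G_memℒp t)).mono fun x hx => by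
      dsimp only; rw [hF]; dsimp only; rw [hx])
  have hb : ∀ t n, (inner ℂ (fourierBasis n) (F t) : ℂ) = (sinc ((n:ℝ) - t) : ℂ) := by
    intro t n
    rw [← fourierBasis.repr_apply_apply, fourierBasis_repr, hcoe, G_coeff]
  have hb' : ∀ t n, (inner ℂ (F t) (fourierBasis n) : ℂ) = (sinc ((n:ℝ) - t) : ℂ) := by
    intro t n
    rw [← inner_conj_symm, hb, Complex.conj_ofReal]
  have hinner : (inner ℂ (F τ) (F τ') : ℂ) = (sinc (τ - τ') : ℂ) := by
    rw [MeasureTheory.L2.inner_def]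
    have h2 : (∫ x, (inner ℂ (⇑(F τ) x) (⇑(F τ') x) : ℂ)
          ∂haarAddCircle) = ∫ x : AddCircle (1:ℝ), G (τ' - τ) x ∂haarAddCircle := by
      refine integral_congr_ae ?_
      filter_upwards [MemLp.coeFn_toLp (G_memℒp τ), MemLp.coeFn_toLp (G_memℒp τ')] with x h1 h2
      rw [hF]; dsimp only; rw [h1, h2, RCLike.inner_apply, mul_comm, G_mul]
    rw [h2]
    have h3 : (∫ x : AddCircle (1:ℝ), G (τ' - τ) x ∂haarAddCircle) = fourierCoeff (G (τ' - τ)) 0 := by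
      rw [fourierCoeff]
      refine integral_congr_ae (MeasureTheory.ae_of_all _ fun x => ?_)
      simp [fourier_zero]
    rw [h3, G_coeff]
    congr 1
    push_cast
    ring
  have hsum := fourierBasis.tsum_inner_mul_inner (F τ) (F τ')
  simp only [hb, hb'] at hsum
  rw [hinner] at hsum
  apply Complex.ofReal_injective
  rw [Complex.ofReal_tsum]
  push_cast
  exact hsum

theorem stmt6 (τ τ' : ℝ) :
    (∑' n : ℤ, sinc ((n : ℝ) - τ) * sinc ((n : ℝ) - τ')) = sinc (τ - τ') ∧
    (∑' n : ℤ, sinc ((n : ℝ) - τ) ^ 2) = 1 := by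
  refine ⟨stmt6' τ τ', ?_⟩
  have := stmt6' τ τ
  simp only [sub_self] at this
  simp only [sq]
  rw [this, sinc]
  simp
end

section
/- The DPSS eigenvalue equation λ p[n] = ∑_{m} p[m] sin(2πW(n-m))/(π(n-m)) (with the diagonal term 2W at n = m), considered as the eigenproblem of the K×K symmetric matrix A with entries A_{n,m} = sin(2πW(n-m))/(π(n-m)) for n≠m and A_{n,n} = 2W, has all eigenvalues strictly between 0 and 1 when 0 < W < 1/2. -/
open scoped Real
open Matrix

section DPSSAux
open Polynomial

noncomputable def gg {K : ℕ} (v : Fin K → ℝ) (f : ℝ) : ℝ :=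
  (∑ n : Fin K, v n * Real.cos (2*π*(n:ℝ)*f))^2 + (∑ n : Fin K, v n * Real.sin (2*π*(n:ℝ)*f))^2

lemma gg_nonneg {K : ℕ} (v : Fin K → ℝ) (f : ℝ) : 0 ≤ gg v f := by unfold gg; positivity

lemma gg_cont {K : ℕ} (v : Fin K → ℝ) : Continuous (gg v) := by
  unfold gg; fun_prop

lemma exp_inj {a b : ℝ} (hba : b - a ≤ 1) :
    Set.InjOn (fun f : ℝ => Complex.exp (2*π*f*Complex.I)) (Set.Ioo a b) := by
  intro x hx y hy h
  have h' : Complex.exp (2*π*x*Complex.I) = Complex.exp (2*π*y*Complex.I) := h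
  rw [Complex.exp_eq_exp_iff_exists_int] at h'
  obtain ⟨k, hk⟩ := h'
  have h2 : ((x:ℂ) - y - k) * (2*π*Complex.I) = 0 := by linear_combination hk
  have hpi : (2*π*Complex.I : ℂ) ≠ 0 := by
    simp [Real.pi_ne_zero, Complex.I_ne_zero, Complex.ofReal_ne_zero]
  have h3 : (x:ℂ) = (y:ℂ) + k := by
    rcases mul_eq_zero.1 h2 with h | h
    · linear_combination h
    · exact absurd h hpi
  have hxy : x = y + k := by exact_mod_cast h3
  have hk0 : k = 0 := by
    have h1 : x - y < 1 := by have := hx.2; have := hy.1; linarith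
    have h2' : -1 < x - y := by have := hx.1; have := hy.2; linarith
    have habs : |(k:ℝ)| < 1 := by rw [abs_lt]; constructor <;> linarith
    have : |k| < 1 := by exact_mod_cast habs
    rw [abs_lt] at this; omega
  simp [hk0] at hxy; linarith

lemma gg_zero_imp {K : ℕ} (v : Fin K → ℝ) {a b : ℝ} (hab : a < b) (hba : b - a ≤ 1)
    (h : ∀ f ∈ Set.Ioo a b, gg v f = 0) : v = 0 := by
  set p : ℂ[X] := ∑ n : Fin K, C (v n : ℂ) * X ^ (n:ℕ) with hp
  have hroot : ∀ f ∈ Set.Ioo a b, p.IsRoot (Complex.exp (2*π*f*Complex.I)) := by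
    intro f hf
    have hgf := h f hf
    unfold gg at hgf
    have h1 : (∑ n : Fin K, v n * Real.cos (2*π*(n:ℝ)*f)) = 0 ∧
        (∑ n : Fin K, v n * Real.sin (2*π*(n:ℝ)*f)) = 0 := by
      constructor <;> nlinarith [sq_nonneg (∑ n : Fin K, v n * Real.cos (2*π*(n:ℝ)*f)),
        sq_nonneg (∑ n : Fin K, v n * Real.sin (2*π*(n:ℝ)*f))]
    have key : ∀ n : Fin K, (Complex.exp (2*π*f*Complex.I)) ^ (n:ℕ)
        = ((Real.cos (2*π*(n:ℝ)*f) : ℝ) : ℂ) + ((Real.sin (2*π*(n:ℝ)*f) : ℝ) : ℂ) * Complex.I := by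
      intro n
      rw [← Complex.exp_nat_mul]
      have harg : ((n:ℕ):ℂ) * (2*π*f*Complex.I) = ((2*π*(n:ℝ)*f : ℝ) : ℂ) * Complex.I := by
        push_cast; ring
      rw [harg, Complex.exp_mul_I, Complex.ofReal_cos, Complex.ofReal_sin]
    have heval : p.eval (Complex.exp (2*π*f*Complex.I)) =
        ((∑ n : Fin K, v n * Real.cos (2*π*(n:ℝ)*f) : ℝ) : ℂ)
        + ((∑ n : Fin K, v n * Real.sin (2*π*(n:ℝ)*f) : ℝ) : ℂ) * Complex.I := by
      rw [hp, Polynomial.eval_finset_sum]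
      push_cast
      rw [Finset.sum_mul, ← Finset.sum_add_distrib]
      refine Finset.sum_congr rfl fun n _ => ?_
      rw [Polynomial.eval_mul, Polynomial.eval_C, Polynomial.eval_pow, Polynomial.eval_X, key n]
      push_cast
      ring
    rw [Polynomial.IsRoot, heval, h1.1, h1.2]
    simp
  have hinf : {x | p.IsRoot x}.Infinite := by
    have : ((fun f : ℝ => Complex.exp (2*π*f*Complex.I)) '' (Set.Ioo a b)).Infinite :=
      (Set.Ioo_infinite hab).image (exp_inj hba)
    refine this.mono ?_
    rintro z ⟨f, hf, rfl⟩
    exact hroot f hf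
  have hp0 : p = 0 := Polynomial.eq_zero_of_infinite_isRoot p hinf
  funext j
  have hc : p.coeff (j:ℕ) = (v j : ℂ) := by
    rw [hp, Polynomial.finset_sum_coeff]
    rw [Finset.sum_eq_single j]
    · simp [Polynomial.coeff_C_mul, Polynomial.coeff_X_pow]
    · intro n _ hne
      have : (j:ℕ) ≠ (n:ℕ) := fun hh => hne (Fin.val_injective hh).symm
      simp [Polynomial.coeff_C_mul, Polynomial.coeff_X_pow, this]
    · simp
  rw [hp0] at hc
  simp at hc
  exact_mod_cast hc.symm

lemma integral_cos_lin (d a b : ℝ) : ∫ f in a..b, Real.cos (2*π*d*f) =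
    if d = 0 then b - a else (Real.sin (2*π*d*b) - Real.sin (2*π*d*a))/(2*π*d) := by
  split_ifs with hd
  · simp [hd]
  · have hc : 2*π*d ≠ 0 := by
      have := Real.pi_ne_zero; positivity
    rw [show (fun f => Real.cos (2*π*d*f)) = (fun f => Real.cos ((2*π*d)*f)) from rfl,
      intervalIntegral.integral_comp_mul_left Real.cos hc, integral_cos]
    simp only [smul_eq_mul]
    field_simp

lemma gg_expand {K : ℕ} (v : Fin K → ℝ) (f : ℝ) :
    gg v f = ∑ n : Fin K, ∑ m : Fin K, v n * v m * Real.cos (2*π*((n:ℝ)-(m:ℝ))*f) := by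
  unfold gg
  rw [sq, sq, Finset.sum_mul_sum, Finset.sum_mul_sum, ← Finset.sum_add_distrib]
  refine Finset.sum_congr rfl fun n _ => ?_
  rw [← Finset.sum_add_distrib]
  refine Finset.sum_congr rfl fun m _ => ?_
  have : 2*π*((n:ℝ)-(m:ℝ))*f = 2*π*(n:ℝ)*f - 2*π*(m:ℝ)*f := by ring
  rw [this, Real.cos_sub]
  ring

lemma integral_gg {K : ℕ} (v : Fin K → ℝ) (a b : ℝ) :
    ∫ f in a..b, gg v f = ∑ n : Fin K, ∑ m : Fin K, v n * v m *
      (if ((n:ℝ)-(m:ℝ)) = 0 then b - a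
       else (Real.sin (2*π*((n:ℝ)-(m:ℝ))*b) - Real.sin (2*π*((n:ℝ)-(m:ℝ))*a))/(2*π*((n:ℝ)-(m:ℝ)))) := by
  have hfe : (fun f => gg v f) = fun f => ∑ n : Fin K, ∑ m : Fin K,
      v n * v m * Real.cos (2*π*((n:ℝ)-(m:ℝ))*f) := funext (gg_expand v)
  have hint : ∀ (n m : Fin K), IntervalIntegrable
      (fun f => v n * v m * Real.cos (2*π*((n:ℝ)-(m:ℝ))*f)) MeasureTheory.volume a b := by
    intro n m; apply Continuous.intervalIntegrable; fun_prop
  rw [show (∫ f in a..b, gg v f) = ∫ f in a..b, ∑ n : Fin K, ∑ m : Fin K,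
      v n * v m * Real.cos (2*π*((n:ℝ)-(m:ℝ))*f) from by rw [← hfe]]
  rw [intervalIntegral.integral_finset_sum (fun n _ => by
    apply Continuous.intervalIntegrable; fun_prop)]
  refine Finset.sum_congr rfl fun n _ => ?_
  rw [intervalIntegral.integral_finset_sum (fun m _ => hint n m)]
  refine Finset.sum_congr rfl fun m _ => ?_
  rw [intervalIntegral.integral_const_mul, integral_cos_lin]

lemma gg_integral_pos {K : ℕ} (v : Fin K → ℝ) (hv : v ≠ 0) {a b : ℝ} (hab : a < b)
    (hba : b - a ≤ 1) : 0 < ∫ f in a..b, gg v f := by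
  rw [intervalIntegral.integral_pos_iff_support_of_nonneg_ae
    (Filter.Eventually.of_forall (gg_nonneg v)) ((gg_cont v).intervalIntegrable a b)]
  refine ⟨hab, ?_⟩
  -- find a point where gg v ≠ 0
  obtain ⟨f0, hf0, hgf0⟩ : ∃ f0 ∈ Set.Ioo a b, gg v f0 ≠ 0 := by
    by_contra hcon
    push_neg at hcon
    exact hv (gg_zero_imp v hab hba hcon)
  set U : Set ℝ := {x | gg v x ≠ 0} ∩ Set.Ioo a b with hU
  have hUopen : IsOpen U :=
    ((isOpen_compl_singleton.preimage (gg_cont v))).inter isOpen_Ioo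
  have hUne : U.Nonempty := ⟨f0, hgf0, hf0⟩
  have hpos : 0 < MeasureTheory.volume U := hUopen.measure_pos _ hUne
  refine lt_of_lt_of_le hpos (MeasureTheory.measure_mono ?_)
  rintro x ⟨hx1, hx2⟩
  exact ⟨hx1, Set.Ioo_subset_Ioc_self hx2⟩

end DPSSAux

theorem stmt17 (W : ℝ) (hW : 0 < W ∧ W < 1 / 2) (K : ℕ) (hK : 0 < K)
    (A : Matrix (Fin K) (Fin K) ℝ)
    (hA : ∀ n m : Fin K, A n m =
      if n = m then 2 * W
      else Real.sin (2 * π * W * ((n : ℝ) - (m : ℝ))) / (π * ((n : ℝ) - (m : ℝ))))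
    (lam : ℝ) (v : Fin K → ℝ) (hv : v ≠ 0) (heig : A.mulVec v = lam • v) :
    0 < lam ∧ lam < 1 := by
  obtain ⟨hW0, hW1⟩ := hW
  have hcast : ∀ n m : Fin K, n ≠ m → ((n:ℝ) - (m:ℝ)) ≠ 0 := by
    intro n m hne
    rw [sub_ne_zero]
    exact_mod_cast fun h => hne (Fin.val_injective (by exact_mod_cast h))
  set S : ℝ := ∑ n : Fin K, v n ^ 2 with hSdef
  have hS : 0 < S := by
    obtain ⟨n0, hn0⟩ := Function.ne_iff.1 hv
    exact Finset.sum_pos' (fun i _ => sq_nonneg _) ⟨n0, Finset.mem_univ _, lt_of_le_of_ne (sq_nonneg _) (Ne.symm (pow_ne_zero 2 hn0))⟩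
  -- quadratic form = lam * S
  have hquad_eig : (∑ n : Fin K, ∑ m : Fin K, v n * (A n m * v m)) = lam * S := by
    have h1 : ∀ n : Fin K, (A.mulVec v) n = lam * v n := by
      intro n; rw [heig]; simp
    calc (∑ n : Fin K, ∑ m : Fin K, v n * (A n m * v m))
        = ∑ n : Fin K, v n * (A.mulVec v) n := by
          refine Finset.sum_congr rfl fun n _ => ?_
          rw [Matrix.mulVec, dotProduct, Finset.mul_sum]
      _ = ∑ n : Fin K, v n * (lam * v n) := by
          refine Finset.sum_congr rfl fun n _ => by rw [h1 n]
      _ = lam * S := by rw [hSdef, Finset.mul_sum]; exact Finset.sum_congr rfl fun n _ => by ring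
  -- quadratic form = integral over [-W, W]
  have hquad_int : ∫ f in (-W)..W, gg v f = ∑ n : Fin K, ∑ m : Fin K, v n * (A n m * v m) := by
    rw [integral_gg]
    refine Finset.sum_congr rfl fun n _ => Finset.sum_congr rfl fun m _ => ?_
    rw [hA n m]
    by_cases hnm : n = m
    · subst hnm
      simp only [sub_self, if_pos rfl, if_pos rfl]
      ring
    · have hd := hcast n m hnm
      rw [if_neg hd, if_neg hnm]
      have h2 : 2*π*((n:ℝ)-(m:ℝ))*(-W) = -(2*π*((n:ℝ)-(m:ℝ))*W) := by ring
      rw [h2, Real.sin_neg]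
      have h3 : 2 * π * W * ((n:ℝ)-(m:ℝ)) = 2*π*((n:ℝ)-(m:ℝ))*W := by ring
      rw [h3]
      have hpi := Real.pi_ne_zero
      field_simp
      ring
  -- integral over [-1/2, 1/2] = S
  have hS_int : ∫ f in (-(1/2 : ℝ))..(1/2 : ℝ), gg v f = S := by
    rw [integral_gg, hSdef]
    refine Finset.sum_congr rfl fun n _ => ?_
    rw [Finset.sum_eq_single n]
    · rw [if_pos (sub_self _)]
      ring_nf
    · intro m _ hmn
      have hd := hcast n m (fun h => hmn (h.symm))
      rw [if_neg hd]
      have hz : ∀ c : ℝ, c = ((n:ℤ) - (m:ℤ) : ℝ) * π ∨ c = -(((n:ℤ) - (m:ℤ) : ℝ) * π) → Real.sin c = 0 := by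
        rintro c (rfl | rfl)
        · exact_mod_cast Real.sin_int_mul_pi ((n:ℤ) - (m:ℤ))
        · rw [Real.sin_neg, neg_eq_zero]
          exact_mod_cast Real.sin_int_mul_pi ((n:ℤ) - (m:ℤ))
      have e1 : 2*π*((n:ℝ)-(m:ℝ))*(1/2 : ℝ) = ((n:ℤ) - (m:ℤ) : ℝ) * π := by push_cast; ring
      have e2 : 2*π*((n:ℝ)-(m:ℝ))*(-(1/2) : ℝ) = -(((n:ℤ) - (m:ℤ) : ℝ) * π) := by push_cast; ring
      rw [e1, e2, hz _ (Or.inl rfl), hz _ (Or.inr rfl)]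
      simp
    · simp
  -- key positivity facts
  have hWhalf : (2 : ℝ) * W ≤ 1 := by linarith
  have hpos1 : 0 < ∫ f in (-W)..W, gg v f :=
    gg_integral_pos v hv (by linarith) (by linarith)
  have hpos2 : 0 < ∫ f in W..(1/2 : ℝ), gg v f :=
    gg_integral_pos v hv (by linarith) (by linarith)
  have hnn : 0 ≤ ∫ f in (-(1/2 : ℝ))..(-W), gg v f :=
    intervalIntegral.integral_nonneg (by linarith) (fun x _ => gg_nonneg v x)
  have hii : ∀ a b : ℝ, IntervalIntegrable (gg v) MeasureTheory.volume a b :=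
    fun a b => (gg_cont v).intervalIntegrable a b
  have hsplit : (∫ f in (-(1/2 : ℝ))..(-W), gg v f) + (∫ f in (-W)..W, gg v f)
      + (∫ f in W..(1/2 : ℝ), gg v f) = ∫ f in (-(1/2 : ℝ))..(1/2 : ℝ), gg v f := by
    rw [intervalIntegral.integral_add_adjacent_intervals (hii _ _) (hii _ _),
      intervalIntegral.integral_add_adjacent_intervals (hii _ _) (hii _ _)]
  have hlamS : lam * S = ∫ f in (-W)..W, gg v f := by rw [hquad_int, hquad_eig]
  constructor
  · nlinarith
  · have : lam * S < S := by
      rw [hlamS, ← hS_int, ← hsplit]; linarith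
    nlinarith
end
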